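/- The ω-language L = {aⁿbⁿ | n ≥ 1}* · {a}^ω ∪ {aⁿbⁿ | n ≥ 1}^ω cannot be written as a finite union U₁V₁^ω ∪ ... ∪ U_nV_n^ω with all U_i, V_i ⊆ {a,b}* Parikh-recognizable. -/

import Mathlib

/-- A linear subset of `ℕ^d`: all vectors `b₀ + z₁•b₁ + ... + z_ℓ•b_ℓ`. -/
def IsLinear {d : ℕ} (S : Set (Fin d → ℕ)) : Prop :=
  ∃ (b₀ : Fin d → ℕ) (ℓ : ℕ) (b : Fin ℓ → Fin d → ℕ),
    S = {v | ∃ z : Fin ℓ → ℕ, v = b₀ + ∑ i, z i • b i}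

/-- A semi-linear subset of `ℕ^d`: a finite union of linear sets. -/
def IsSemilinear {d : ℕ} (S : Set (Fin d → ℕ)) : Prop :=
  ∃ (n : ℕ) (T : Fin n → Set (Fin d → ℕ)), (∀ i, IsLinear (T i)) ∧ S = ⋃ i, T i

/-- The number of input-consuming steps among the first `i` steps. -/
def readCount (reads : ℕ → Bool) (i : ℕ) : ℕ :=
  ((Finset.range i).filter (fun j => reads j = true)).card

/-- A run of an ε-free vector-labeled automaton on the infinite word `α`:
`p` is the state sequence, `v i` the vector of the `i`-th transition. -/
def IsRun {Q Sig : Type} {d : ℕ} (q0 : Q) (Δ : Set (Q × Sig × (Fin d → ℕ) × Q))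
    (α : ℕ → Sig) (p : ℕ → Q) (v : ℕ → Fin d → ℕ) : Prop :=
  p 0 = q0 ∧ ∀ i, (p i, α i, v i, p (i + 1)) ∈ Δ

/-- A run of an automaton with ε-transitions `E` on the infinite word `α`;
`reads i = true` iff the `i`-th transition consumes an input symbol, and
infinitely many transitions must consume a symbol. -/
def IsEpsRun {Q Sig : Type} {d : ℕ} (q0 : Q) (Δ : Set (Q × Sig × (Fin d → ℕ) × Q))
    (E : Set (Q × (Fin d → ℕ) × Q)) (α : ℕ → Sig) (p : ℕ → Q) (v : ℕ → Fin d → ℕ)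
    (reads : ℕ → Bool) : Prop :=
  p 0 = q0 ∧ (∀ N, ∃ i, N ≤ i ∧ reads i = true) ∧
    ∀ i, if reads i then (p i, α (readCount reads i), v i, p (i + 1)) ∈ Δ
      else (p i, v i, p (i + 1)) ∈ E

/-- Prefix-acceptance: infinitely many positions `n ≥ 1` where the current state is
accepting and the accumulated vector sum lies in the (state-dependent) semi-linear set. -/
def PrefixCond {Q : Type} {d : ℕ} (F : Set Q) (C : Q → Set (Fin d → ℕ))
    (p : ℕ → Q) (v : ℕ → Fin d → ℕ) : Prop :=
  ∀ N, ∃ n, N ≤ n ∧ 1 ≤ n ∧ p n ∈ F ∧ (∑ j ∈ Finset.range n, v j) ∈ C (p n)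

/-- Weak reset-acceptance: there are infinitely many reset positions `0 = k 0 < k 1 < ...`
such that each `p (k (i+1))` is accepting and the vector sum between consecutive
reset positions lies in the corresponding semi-linear set. -/
def WeakCond {Q : Type} {d : ℕ} (F : Set Q) (C : Q → Set (Fin d → ℕ))
    (p : ℕ → Q) (v : ℕ → Fin d → ℕ) : Prop :=
  ∃ k : ℕ → ℕ, k 0 = 0 ∧ StrictMono k ∧
    ∀ i, p (k (i + 1)) ∈ F ∧
      (∑ j ∈ Finset.Ico (k i) (k (i + 1)), v j) ∈ C (p (k (i + 1)))

/-- Strong reset-acceptance: `k 1 < k 2 < ...` enumerates *all* positions `n ≥ 1` of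
accepting states (so there are infinitely many), and the vector sum between any two
consecutive such positions (with `k 0 = 0`) lies in the corresponding semi-linear set. -/
def StrongCond {Q : Type} {d : ℕ} (F : Set Q) (C : Q → Set (Fin d → ℕ))
    (p : ℕ → Q) (v : ℕ → Fin d → ℕ) : Prop :=
  ∃ k : ℕ → ℕ, k 0 = 0 ∧ StrictMono k ∧
    (∀ n, 1 ≤ n → (p n ∈ F ↔ ∃ i, 1 ≤ i ∧ k i = n)) ∧
    ∀ i, (∑ j ∈ Finset.Ico (k i) (k (i + 1)), v j) ∈ C (p (k (i + 1)))

/-- A Parikh(-Büchi) automaton of dimension `d` (also used as a Parikh automaton on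
finite words): finitely many states, vector-labeled transitions, a semi-linear set `C`. -/
structure PBA (Sig : Type) (d : ℕ) where
  Q : Type
  fin : Fintype Q
  q0 : Q
  Δ : Set (Q × Sig × (Fin d → ℕ) × Q)
  F : Set Q
  C : Set (Fin d → ℕ)

attribute [instance] PBA.fin

/-- `P_ω(A)`: the ω-language recognized under prefix-acceptance (PPBA). -/
def PBA.PrefixLang {Sig d} (A : PBA Sig d) : Set (ℕ → Sig) :=
  {α | ∃ p v, IsRun A.q0 A.Δ α p v ∧ PrefixCond A.F (fun _ => A.C) p v}

/-- `W_ω(A)`: the ω-language recognized under weak reset-acceptance (WPBA). -/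
def PBA.WeakLang {Sig d} (A : PBA Sig d) : Set (ℕ → Sig) :=
  {α | ∃ p v, IsRun A.q0 A.Δ α p v ∧ WeakCond A.F (fun _ => A.C) p v}

/-- `S_ω(A)`: the ω-language recognized under strong reset-acceptance (SPBA). -/
def PBA.StrongLang {Sig d} (A : PBA Sig d) : Set (ℕ → Sig) :=
  {α | ∃ p v, IsRun A.q0 A.Δ α p v ∧ StrongCond A.F (fun _ => A.C) p v}

/-- Acceptance of a finite word by a Parikh automaton. -/
def PBA.FinAccepts {Sig d} (A : PBA Sig d) (w : List Sig) : Prop :=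
  ∃ (p : ℕ → A.Q) (v : ℕ → Fin d → ℕ),
    p 0 = A.q0 ∧ (∀ i : Fin w.length, (p i, w.get i, v i, p (i + 1)) ∈ A.Δ) ∧
    p w.length ∈ A.F ∧ (∑ j ∈ Finset.range w.length, v j) ∈ A.C

/-- `L(A)`: the language of finite words recognized by a Parikh automaton. -/
def PBA.FinLang {Sig d} (A : PBA Sig d) : Set (List Sig) := {w | A.FinAccepts w}

/-- A Parikh-Büchi automaton with ε-transitions. -/
structure EpsPBA (Sig : Type) (d : ℕ) where
  Q : Type
  fin : Fintype Q
  q0 : Q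
  Δ : Set (Q × Sig × (Fin d → ℕ) × Q)
  E : Set (Q × (Fin d → ℕ) × Q)
  F : Set Q
  C : Set (Fin d → ℕ)

attribute [instance] EpsPBA.fin

def EpsPBA.PrefixLang {Sig d} (A : EpsPBA Sig d) : Set (ℕ → Sig) :=
  {α | ∃ p v reads, IsEpsRun A.q0 A.Δ A.E α p v reads ∧ PrefixCond A.F (fun _ => A.C) p v}

def EpsPBA.WeakLang {Sig d} (A : EpsPBA Sig d) : Set (ℕ → Sig) :=
  {α | ∃ p v reads, IsEpsRun A.q0 A.Δ A.E α p v reads ∧ WeakCond A.F (fun _ => A.C) p v}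

def EpsPBA.StrongLang {Sig d} (A : EpsPBA Sig d) : Set (ℕ → Sig) :=
  {α | ∃ p v reads, IsEpsRun A.q0 A.Δ A.E α p v reads ∧ StrongCond A.F (fun _ => A.C) p v}

/-- A Multi-PBA: every (accepting) state carries its own semi-linear set. -/
structure MPBA (Sig : Type) (d : ℕ) where
  Q : Type
  fin : Fintype Q
  q0 : Q
  Δ : Set (Q × Sig × (Fin d → ℕ) × Q)
  F : Set Q
  C : Q → Set (Fin d → ℕ)

attribute [instance] MPBA.fin

def MPBA.PrefixLang {Sig d} (A : MPBA Sig d) : Set (ℕ → Sig) :=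
  {α | ∃ p v, IsRun A.q0 A.Δ α p v ∧ PrefixCond A.F A.C p v}

/-- A Multi-PBA with ε-transitions. -/
structure EpsMPBA (Sig : Type) (d : ℕ) where
  Q : Type
  fin : Fintype Q
  q0 : Q
  Δ : Set (Q × Sig × (Fin d → ℕ) × Q)
  E : Set (Q × (Fin d → ℕ) × Q)
  F : Set Q
  C : Q → Set (Fin d → ℕ)

attribute [instance] EpsMPBA.fin

def EpsMPBA.StrongLang {Sig d} (A : EpsMPBA Sig d) : Set (ℕ → Sig) :=
  {α | ∃ p v reads, IsEpsRun A.q0 A.Δ A.E α p v reads ∧ StrongCond A.F A.C p v}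

/-- A language of finite words is Parikh-recognizable. -/
def ParikhRec {Sig : Type} (L : Set (List Sig)) : Prop :=
  ∃ d, ∃ A : PBA Sig d, IsSemilinear A.C ∧ A.FinLang = L

/-- An ω-language is PPBA-recognizable. -/
def PPBARec {Sig : Type} (L : Set (ℕ → Sig)) : Prop :=
  ∃ d, ∃ A : PBA Sig d, IsSemilinear A.C ∧ A.PrefixLang = L

/-- An ω-language is SPBA-recognizable. -/
def SPBARec {Sig : Type} (L : Set (ℕ → Sig)) : Prop :=
  ∃ d, ∃ A : PBA Sig d, IsSemilinear A.C ∧ A.StrongLang = L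

/-- Concatenation of a language of finite words with an ω-language. -/
def CatLang {Sig : Type} (L₁ : Set (List Sig)) (L₂ : Set (ℕ → Sig)) : Set (ℕ → Sig) :=
  {α | ∃ u ∈ L₁, ∃ β ∈ L₂,
    (∀ i : Fin u.length, α i = u.get i) ∧ ∀ n, β n = α (u.length + n)}

/-- `α` is the concatenation `w 0 ++ w 1 ++ w 2 ++ ⋯` of the finite words `w i`. -/
def IsOmegaConcat {Sig : Type} (w : ℕ → List Sig) (α : ℕ → Sig) : Prop :=
  ∀ n : ℕ, ∀ i : Fin (((List.range n).map w).flatten.length),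
    ((List.range n).map w).flatten.get i = α i

/-- The ω-power `L^ω = {w₁w₂w₃⋯ ∣ w_i ∈ L ∖ {ε}}`. -/
def OmegaPower {Sig : Type} (L : Set (List Sig)) : Set (ℕ → Sig) :=
  {α | ∃ w : ℕ → List Sig, (∀ i, w i ∈ L) ∧ (∀ i, w i ≠ []) ∧ IsOmegaConcat w α}

/-- Kleene star of a set of finite words. -/
def ListStar {Sig : Type} (L : Set (List Sig)) : Set (List Sig) :=
  {w | ∃ ws : List (List Sig), (∀ u ∈ ws, u ∈ L) ∧ w = ws.flatten}

/-- A (nondeterministic) Büchi automaton. -/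
structure BuchiNFA (Sig : Type) where
  Q : Type
  fin : Fintype Q
  q0 : Q
  Δ : Set (Q × Sig × Q)
  F : Set Q

attribute [instance] BuchiNFA.fin

def BuchiNFA.Lang {Sig} (B : BuchiNFA Sig) : Set (ℕ → Sig) :=
  {α | ∃ p : ℕ → B.Q, p 0 = B.q0 ∧ (∀ i, (p i, α i, p (i + 1)) ∈ B.Δ) ∧
    ∀ N, ∃ n, N ≤ n ∧ p n ∈ B.F}

/-- An ω-language is ω-regular if it is recognized by a Büchi automaton. -/
def OmegaRegular {Sig : Type} (R : Set (ℕ → Sig)) : Prop := ∃ B : BuchiNFA Sig, B.Lang = R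

/-- A blind `k`-counter machine: transitions are labeled by a letter or ε (`Option Sig`)
and an integer vector. -/
structure CM (Sig : Type) (k : ℕ) where
  Q : Type
  fin : Fintype Q
  q0 : Q
  Δ : Set (Q × Option Sig × (Fin k → ℤ) × Q)
  F : Set Q

attribute [instance] CM.fin

/-- The ω-language of a blind counter machine: some run reads every symbol of `α`
and is infinitely often in an accepting state with all counters equal to `0`. -/
def CM.Lang {Sig k} (M : CM Sig k) : Set (ℕ → Sig) :=
  {α | ∃ (p : ℕ → M.Q) (v : ℕ → Fin k → ℤ) (reads : ℕ → Bool),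
    p 0 = M.q0 ∧ (∀ N, ∃ i, N ≤ i ∧ reads i = true) ∧
    (∀ i, if reads i then (p i, some (α (readCount reads i)), v i, p (i + 1)) ∈ M.Δ
      else (p i, (none : Option Sig), v i, p (i + 1)) ∈ M.Δ) ∧
    ∀ N, ∃ n, N ≤ n ∧ p n ∈ M.F ∧ (∑ j ∈ Finset.range n, v j) = 0}
namespace CEX

abbrev Ltr := Fin 2

def Sset : Set (List Ltr) := {w : List (Fin 2) | ∃ m : ℕ, 1 ≤ m ∧
            w = List.replicate m 0 ++ List.replicate m 1}

def Zfn : Set (ℕ → Ltr) := {α : ℕ → Fin 2 | ∀ k, α k = 0}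

def cnt (γ : ℕ → Ltr) (ℓ : Ltr) (q : ℕ) : ℕ :=
  ∑ i ∈ Finset.range q, if γ i = ℓ then 1 else 0

lemma cnt_split (γ : ℕ → Ltr) (ℓ : Ltr) {a b : ℕ} (h : a ≤ b) :
    cnt γ ℓ b = cnt γ ℓ a + ∑ i ∈ Finset.Ico a b, (if γ i = ℓ then 1 else 0) := by
  unfold cnt
  rw [Finset.range_eq_Ico,
    ← Finset.sum_Ico_consecutive _ (Nat.zero_le a) h, ← Finset.range_eq_Ico]

lemma ico_shift (f : ℕ → ℕ) (a b t : ℕ) :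
    ∑ i ∈ Finset.Ico (a + t) (b + t), f (i - t) = ∑ i ∈ Finset.Ico a b, f i := by
  rw [Finset.sum_Ico_eq_sum_range, Finset.sum_Ico_eq_sum_range]
  have : b + t - (a + t) = b - a := by omega
  rw [this]
  apply Finset.sum_congr rfl
  intro i _
  congr 1
  omega

lemma block_get (m i : ℕ) (h : i < (List.replicate m (0:Ltr) ++ List.replicate m 1).length) :
    (List.replicate m (0:Ltr) ++ List.replicate m 1)[i] = if i < m then 0 else 1 := by
  by_cases hi : i < m
  · rw [List.getElem_append_left (by simpa using hi), List.getElem_replicate, if_pos hi]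
  · rw [List.getElem_append_right (by simpa using hi), List.getElem_replicate, if_neg hi]

lemma balanced_flatten : ∀ (ws : List (List Ltr)), (∀ w ∈ ws, w ∈ Sset) →
    ∀ (α : ℕ → Ltr), (∀ (i : ℕ) (h : i < ws.flatten.length), α i = ws.flatten[i]) →
    ∀ q, 1 ≤ q → q ≤ ws.flatten.length → α (q-1) = 1 → α q = 0 →
    cnt α 0 q = cnt α 1 q := by
  intro ws
  induction ws with
  | nil => intro _ α _ q hq hle _ _; simp at hle; omega
  | cons w ws ih =>
    intro hS α hag q hq hle h1 h0
    obtain ⟨m, hm, hw⟩ := hS w List.mem_cons_self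
    have hwlen : w.length = 2*m := by subst hw; simp; omega
    have hflat : (w :: ws).flatten = w ++ ws.flatten := by simp
    have hlen : (w :: ws).flatten.length = 2*m + ws.flatten.length := by
      rw [hflat]; simp [hwlen]
    have hag2 : ∀ (i : ℕ) (h : i < (w ++ ws.flatten).length), α i = (w ++ ws.flatten)[i] := by
      intro i h
      have h2 : i < (w :: ws).flatten.length := by
        rw [hflat]; exact h
      rw [hag i h2, List.getElem_of_eq hflat]
    have hlen2 : (w ++ ws.flatten).length = 2*m + ws.flatten.length := by simp [hwlen]
    have hpat : ∀ i, i < 2*m → α i = if i < m then 0 else 1 := by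
      intro i hi
      rw [hag2 i (by omega), List.getElem_append_left (by omega)]
      subst hw
      exact block_get m i (by simp; omega)
    have cnt2m0 : cnt α 0 (2*m) = m := by
      unfold cnt
      rw [Finset.range_eq_Ico, ← Finset.sum_Ico_consecutive _ (Nat.zero_le m) (by omega)]
      have e1 : ∑ i ∈ Finset.Ico 0 m, (if α i = (0:Ltr) then 1 else 0) = m := by
        have hh : ∀ i ∈ Finset.Ico 0 m, (if α i = (0:Ltr) then 1 else 0) = 1 := by
          intro i hi
          simp only [Finset.mem_Ico] at hi
          rw [hpat i (by omega), if_pos (show i < m from hi.2)]; simp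
        rw [Finset.sum_congr rfl hh, Finset.sum_const, Nat.card_Ico]
        simp
      have e2 : ∑ i ∈ Finset.Ico m (2*m), (if α i = (0:Ltr) then 1 else 0) = 0 := by
        apply Finset.sum_eq_zero
        intro i hi
        simp only [Finset.mem_Ico] at hi
        rw [hpat i hi.2, if_neg (show ¬ i < m by omega)]
        decide
      omega
    have cnt2m1 : cnt α 1 (2*m) = m := by
      unfold cnt
      rw [Finset.range_eq_Ico, ← Finset.sum_Ico_consecutive _ (Nat.zero_le m) (by omega)]
      have e1 : ∑ i ∈ Finset.Ico 0 m, (if α i = (1:Ltr) then 1 else 0) = 0 := by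
        apply Finset.sum_eq_zero
        intro i hi
        simp only [Finset.mem_Ico] at hi
        rw [hpat i (by omega), if_pos (show i < m from hi.2)]
        decide
      have e2 : ∑ i ∈ Finset.Ico m (2*m), (if α i = (1:Ltr) then 1 else 0) = m := by
        have hh : ∀ i ∈ Finset.Ico m (2*m), (if α i = (1:Ltr) then 1 else 0) = 1 := by
          intro i hi
          simp only [Finset.mem_Ico] at hi
          rw [hpat i hi.2, if_neg (show ¬ i < m by omega)]; simp
        rw [Finset.sum_congr rfl hh, Finset.sum_const, Nat.card_Ico]
        simp; omega
      omega
    by_cases hcase : q ≤ 2*m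
    · have hq1 : m ≤ q - 1 := by
        by_contra hlt
        push_neg at hlt
        have := hpat (q-1) (by omega)
        rw [if_pos hlt] at this
        rw [this] at h1; exact absurd h1 (by decide)
      have hq2m : q = 2*m := by
        by_contra hne
        have hqlt : q < 2*m := by omega
        have := hpat q hqlt
        rw [if_neg (by omega)] at this
        rw [this] at h0; exact absurd h0 (by decide)
      rw [hq2m, cnt2m0, cnt2m1]
    · push_neg at hcase
      have hag' : ∀ (i : ℕ) (hi : i < ws.flatten.length), (fun i => α (2*m + i)) i = ws.flatten[i] := by
        intro i hi
        simp only
        rw [hag2 (2*m + i) (by omega), List.getElem_append_right (by omega)]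
        congr 1
        omega
      have hrec := ih (fun x hx => hS x (List.mem_cons_of_mem _ hx)) _ hag'
        (q - 2*m) (by omega) (by omega)
        (by show α (2*m + (q - 2*m - 1)) = 1
            rw [(by omega : 2*m + (q - 2*m - 1) = q - 1)]; exact h1)
        (by show α (2*m + (q - 2*m)) = 0
            rw [(by omega : 2*m + (q - 2*m) = q)]; exact h0)
      have hsplit : ∀ ℓ, cnt α ℓ q = cnt α ℓ (2*m) + cnt (fun i => α (2*m + i)) ℓ (q - 2*m) := by
        intro ℓ
        rw [cnt_split α ℓ (by omega : 2*m ≤ q)]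
        congr 1
        unfold cnt
        rw [Finset.sum_Ico_eq_sum_range]
      rw [hsplit 0, hsplit 1, cnt2m0, cnt2m1, hrec]

lemma boundary_balance {α : ℕ → Ltr} (h : α ∈ CatLang (ListStar Sset) Zfn) :
    ∀ q, 1 ≤ q → α (q-1) = 1 → α q = 0 → cnt α 0 q = cnt α 1 q := by
  obtain ⟨u, hu, β, hβ, hagree, htail⟩ := h
  obtain ⟨ws, hws, rfl⟩ := hu
  intro q hq h1 h0
  have htail' : ∀ x, ws.flatten.length ≤ x → α x = 0 := by
    intro x hx
    have := htail (x - ws.flatten.length)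
    rw [(by omega : ws.flatten.length + (x - ws.flatten.length) = x)] at this
    rw [← this]
    exact hβ _
  have hqle : q ≤ ws.flatten.length := by
    by_contra hc
    push_neg at hc
    rw [htail' (q-1) (by omega)] at h1
    exact absurd h1 (by decide)
  exact balanced_flatten ws hws α
    (fun i hi => by rw [hagree ⟨i, hi⟩, List.get_eq_getElem]) q hq hqle h1 h0

lemma ones_unbounded {α : ℕ → Ltr} (h : α ∈ OmegaPower Sset) :
    ∀ M, ∃ x, M ≤ x ∧ α x = 1 := by
  obtain ⟨w, hw, hne, hconc⟩ := h
  intro M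
  -- partial lengths grow
  have hlb : ∀ n, n ≤ ((List.range n).map w).flatten.length := by
    intro n
    induction n with
    | zero => simp
    | succ n ih =>
      have : ((List.range (n+1)).map w).flatten = ((List.range n).map w).flatten ++ w n := by
        rw [List.range_succ]; simp
      rw [this, List.length_append]
      have : 1 ≤ (w n).length := List.length_pos_iff.mpr (hne n)
      omega
  set F := ((List.range M).map w).flatten with hF
  obtain ⟨m, hm, hwM⟩ := hw M
  have hflat : ((List.range (M+1)).map w).flatten = F ++ w M := by
    rw [List.range_succ]; simp [hF]
  have hlenM : (w M).length = 2*m := by rw [hwM]; simp; omega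
  have hidx : F.length + (2*m - 1) < ((List.range (M+1)).map w).flatten.length := by
    rw [hflat, List.length_append, hlenM]; omega
  have hFlen : (List.map w (List.range M)).flatten.length = F.length := rfl
  refine ⟨F.length + (2*m - 1), by have := hlb M; omega, ?_⟩
  rw [← hconc (M+1) ⟨F.length + (2*m-1), hidx⟩]
  rw [List.get_eq_getElem]
  simp only
  rw [List.getElem_of_eq hflat, List.getElem_append_right (by omega)]
  have h3 : ∀ (i:ℕ) (h : i < (w M).length), (w M)[i] = (if i < m then (0:Ltr) else 1) := by
    intro i h
    rw [List.getElem_of_eq hwM]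
    exact block_get m i (by rw [← hwM]; exact h)
  rw [h3 _ (by omega), if_neg (by omega)]

/-- the infinite word `(aʳbʳ)ʳ aaa⋯` -/
def chi (r : ℕ) : ℕ → Ltr := fun x => if x < 2*r*r ∧ r ≤ x % (2*r) then 1 else 0

lemma chi_a {r : ℕ} (m o : ℕ) (ho : o < r) : chi r (2*r*m + o) = 0 := by
  unfold chi
  rw [if_neg]
  rintro ⟨-, h2⟩
  rw [(by ring : 2*r*m + o = o + (2*r)*m), Nat.add_mul_mod_self_left,
    Nat.mod_eq_of_lt (by omega)] at h2
  omega

lemma chi_b {r : ℕ} (m o : ℕ) (ho1 : r ≤ o) (ho2 : o < 2*r) (hlt : 2*r*m + o < 2*r*r) :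
    chi r (2*r*m + o) = 1 := by
  unfold chi
  rw [if_pos]
  refine ⟨hlt, ?_⟩
  rw [(by ring : 2*r*m + o = o + (2*r)*m), Nat.add_mul_mod_self_left,
    Nat.mod_eq_of_lt (by omega)]
  exact ho1

lemma chi_tail {r x : ℕ} (h : 2*r*r ≤ x) : chi r x = 0 := by
  unfold chi
  rw [if_neg]
  rintro ⟨h1, -⟩
  omega

lemma cnt_chi (r : ℕ) (ℓ : Ltr) : ∀ m, m ≤ r → cnt (chi r) ℓ (2*r*m) = r*m := by
  intro m
  induction m with
  | zero => intro _; simp [cnt]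
  | succ m ih =>
    intro hm
    rw [(by ring : 2*r*(m+1) = 2*r*m + 2*r)]
    rw [cnt_split (chi r) ℓ (show 2*r*m ≤ 2*r*m + 2*r by omega)]
    rw [ih (by omega)]
    have hsum : ∑ i ∈ Finset.Ico (2*r*m) (2*r*m + 2*r), (if chi r i = ℓ then 1 else 0) = r := by
      rw [← Finset.sum_Ico_consecutive _ (show 2*r*m ≤ 2*r*m + r by omega)
        (show 2*r*m + r ≤ 2*r*m + 2*r by omega)]
      have e1 : ∑ i ∈ Finset.Ico (2*r*m) (2*r*m + r), (if chi r i = ℓ then 1 else 0)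
          = if (0:Ltr) = ℓ then r else 0 := by
        have hh : ∀ i ∈ Finset.Ico (2*r*m) (2*r*m + r),
            (if chi r i = ℓ then 1 else 0) = if (0:Ltr) = ℓ then 1 else 0 := by
          intro i hi
          simp only [Finset.mem_Ico] at hi
          have : i = 2*r*m + (i - 2*r*m) := by omega
          rw [this, chi_a m _ (by omega)]
        rw [Finset.sum_congr rfl hh, Finset.sum_const, Nat.card_Ico,
          (show 2*r*m + r - 2*r*m = r by omega)]
        by_cases h : (0:Ltr) = ℓ <;> simp [h]
      have e2 : ∑ i ∈ Finset.Ico (2*r*m + r) (2*r*m + 2*r), (if chi r i = ℓ then 1 else 0)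
          = if (1:Ltr) = ℓ then r else 0 := by
        have hh : ∀ i ∈ Finset.Ico (2*r*m + r) (2*r*m + 2*r),
            (if chi r i = ℓ then 1 else 0) = if (1:Ltr) = ℓ then 1 else 0 := by
          intro i hi
          simp only [Finset.mem_Ico] at hi
          have : i = 2*r*m + (i - 2*r*m) := by omega
          rw [this, chi_b m _ (by omega) (by omega) (by nlinarith [hi.1, hi.2])]
        rw [Finset.sum_congr rfl hh, Finset.sum_const, Nat.card_Ico,
          (show 2*r*m + 2*r - (2*r*m + r) = r by omega)]
        by_cases h : (1:Ltr) = ℓ <;> simp [h]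
      rw [e1, e2]
      fin_cases ℓ <;> simp
    rw [hsum]
    ring

lemma flatten_replicate_get (r : ℕ) (hr : 1 ≤ r) :
    ∀ (n i : ℕ) (h : i < (List.replicate n (List.replicate r (0:Ltr) ++ List.replicate r 1)).flatten.length),
    (List.replicate n (List.replicate r (0:Ltr) ++ List.replicate r 1)).flatten[i]
      = if i % (2*r) < r then 0 else 1 := by
  have hblklen : (List.replicate r (0:Ltr) ++ List.replicate r 1).length = 2*r := by
    simp; omega
  intro n
  induction n with
  | zero => intro i h; simp at h
  | succ n ih =>
    intro i h
    have hflat : (List.replicate (n+1) (List.replicate r (0:Ltr) ++ List.replicate r 1)).flatten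
        = (List.replicate r (0:Ltr) ++ List.replicate r 1)
          ++ (List.replicate n (List.replicate r (0:Ltr) ++ List.replicate r 1)).flatten := by
      rw [List.replicate_succ]; simp
    have hlen1 : (List.replicate (n+1) (List.replicate r (0:Ltr) ++ List.replicate r 1)).flatten.length
        = 2*r + (List.replicate n (List.replicate r (0:Ltr) ++ List.replicate r 1)).flatten.length := by
      rw [hflat, List.length_append, hblklen]
    rw [List.getElem_of_eq hflat]
    by_cases hi : i < 2*r
    · rw [List.getElem_append_left (by rw [hblklen]; omega)]
      rw [Nat.mod_eq_of_lt hi]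
      exact block_get r i (by rw [hblklen]; omega)
    · rw [List.getElem_append_right (by rw [hblklen]; omega)]
      have hlt : i - (List.replicate r (0:Ltr) ++ List.replicate r 1).length
          < (List.replicate n (List.replicate r (0:Ltr) ++ List.replicate r 1)).flatten.length := by
        rw [hblklen]; omega
      rw [ih _ hlt]
      have : (i - (List.replicate r (0:Ltr) ++ List.replicate r 1).length) % (2*r) = i % (2*r) := by
        rw [hblklen, ← Nat.mod_eq_sub_mod (by omega)]
      rw [this]

lemma chi_len (r : ℕ) (hr : 1 ≤ r) :
    (List.replicate r (List.replicate r (0:Ltr) ++ List.replicate r 1)).flatten.length = 2*r*r := by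
  rw [List.length_flatten]
  rw [List.map_replicate, List.sum_replicate]
  simp
  ring

lemma chi_mem (r : ℕ) (hr : 1 ≤ r) : chi r ∈ CatLang (ListStar Sset) Zfn := by
  refine ⟨(List.replicate r (List.replicate r (0:Ltr) ++ List.replicate r 1)).flatten,
    ⟨List.replicate r _, ?_, rfl⟩, (fun _ => 0), fun k => rfl, ?_, ?_⟩
  · intro u hu
    rw [List.eq_of_mem_replicate hu]
    exact ⟨r, hr, rfl⟩
  · intro i
    rw [List.get_eq_getElem, flatten_replicate_get r hr _ _ i.isLt]
    have hilt : (i:ℕ) < 2*r*r := lt_of_lt_of_eq i.isLt (chi_len r hr)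
    unfold chi
    rcases Nat.lt_or_ge ((i:ℕ) % (2*r)) r with hc | hc
    · rw [if_pos (show (i:ℕ) % (2*r) < r from hc),
        if_neg (show ¬ ((i:ℕ) < 2*r*r ∧ r ≤ (i:ℕ) % (2*r)) by omega)]
    · rw [if_neg (show ¬ ((i:ℕ) % (2*r) < r) by omega),
        if_pos (show ((i:ℕ) < 2*r*r ∧ r ≤ (i:ℕ) % (2*r)) from ⟨hilt, hc⟩)]
  · intro n
    rw [chi_len r hr]
    exact (chi_tail (by omega)).symm

def partlen (w : ℕ → List Ltr) (i : ℕ) : ℕ := ((List.range i).map w).flatten.length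

lemma partlen_succ (w : ℕ → List Ltr) (i : ℕ) :
    partlen w (i+1) = partlen w i + (w i).length := by
  unfold partlen
  rw [List.range_succ]
  simp

lemma partlen_ge {w : ℕ → List Ltr} (hne : ∀ i, w i ≠ []) (i : ℕ) : i ≤ partlen w i := by
  induction i with
  | zero => omega
  | succ i ih =>
    rw [partlen_succ]
    have : 1 ≤ (w i).length := List.length_pos_iff.mpr (hne i)
    omega

lemma piece_get {w : ℕ → List Ltr} {β : ℕ → Ltr} (hconc : IsOmegaConcat w β) (i : ℕ) :
    ∀ (x : ℕ) (hx : x < (w i).length), (w i)[x] = β (partlen w i + x) := by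
  intro x hx
  have hflat : ((List.range (i+1)).map w).flatten = ((List.range i).map w).flatten ++ w i := by
    rw [List.range_succ]; simp
  have hlen : ((List.range (i+1)).map w).flatten.length = partlen w i + (w i).length := by
    rw [hflat, List.length_append]; rfl
  have hidx : partlen w i + x < ((List.range (i+1)).map w).flatten.length := by omega
  have := hconc (i+1) ⟨partlen w i + x, hidx⟩
  rw [List.get_eq_getElem] at this
  simp only at this
  rw [← this, List.getElem_of_eq hflat, List.getElem_append_right (by
    show ((List.range i).map w).flatten.length ≤ partlen w i + x
    unfold partlen; omega)]
  congr 1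
  have hpl : partlen w i = ((List.range i).map w).flatten.length := rfl
  omega

lemma omega_prepend {V : Set (List Ltr)} {β : ℕ → Ltr} (hβ : β ∈ OmegaPower V)
    {t : ℕ} (ht : 1 ≤ t) (hv : List.replicate t (0:Ltr) ∈ V) :
    (fun x => if x < t then (0:Ltr) else β (x - t)) ∈ OmegaPower V := by
  obtain ⟨w, hwV, hwne, hconc⟩ := hβ
  refine ⟨fun i => match i with
    | 0 => List.replicate t 0
    | (i+1) => w i, fun i => ?_, fun i => ?_, ?_⟩
  · match i with
    | 0 => exact hv
    | (i+1) => exact hwV i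
  · match i with
    | 0 => simp; omega
    | (i+1) => exact hwne i
  · intro n i
    match n with
    | 0 => exact absurd i.isLt (by simp)
    | (n+1) =>
      have hflat : ((List.range (n+1)).map (fun i => match i with
          | 0 => List.replicate t (0:Ltr)
          | (i+1) => w i)).flatten = List.replicate t 0 ++ ((List.range n).map w).flatten := by
        rw [List.range_succ_eq_map]
        simp only [List.map_cons, List.map_map]
        rw [List.flatten_cons]
        rfl
      rw [List.get_eq_getElem, List.getElem_of_eq hflat]
      by_cases hi : (i:ℕ) < t
      · rw [List.getElem_append_left (by simpa using hi), List.getElem_replicate]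
        show (0:Ltr) = if (i:ℕ) < t then (0:Ltr) else β ((i:ℕ) - t)
        rw [if_pos hi]
      · push_neg at hi
        have hlen2 : (((List.range (n+1)).map (fun i => match i with
            | 0 => List.replicate t (0:Ltr)
            | (i+1) => w i)).flatten).length
            = t + ((List.range n).map w).flatten.length := by
          rw [hflat, List.length_append, List.length_replicate]
        have hlt : (i:ℕ) - t < ((List.range n).map w).flatten.length := by
          have h2 := i.isLt
          omega
        rw [List.getElem_append_right (by simpa using hi)]
        have hcc := hconc n ⟨(i:ℕ) - t, hlt⟩
        rw [List.get_eq_getElem] at hcc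
        simp only at hcc
        simp only [List.length_replicate]
        show _ = if (i:ℕ) < t then (0:Ltr) else β ((i:ℕ) - t)
        rw [if_neg (by omega)]
        exact hcc

lemma zero_mem_omega {V : Set (List Ltr)} {t : ℕ} (ht : 1 ≤ t)
    (hv : List.replicate t (0:Ltr) ∈ V) :
    (fun _ => (0:Ltr)) ∈ OmegaPower V := by
  refine ⟨fun _ => List.replicate t 0, fun _ => hv, fun i => by simp; omega, ?_⟩
  intro n i
  rw [List.get_eq_getElem]
  have hmem : ((List.range n).map (fun _ => List.replicate t (0:Ltr))).flatten[(i:ℕ)]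
      ∈ ((List.range n).map (fun _ => List.replicate t (0:Ltr))).flatten :=
    List.getElem_mem i.isLt
  rw [List.mem_flatten] at hmem
  obtain ⟨l, hl, hmem2⟩ := hmem
  obtain ⟨a, -, rfl⟩ := List.mem_map.mp hl
  exact List.eq_of_mem_replicate hmem2

/-- rearrangement: moves the segment `[x', y')` to position `y` -/
def sig (y ε y' x' : ℕ) : ℕ → ℕ := fun i =>
  if i < y then i else if i < y + ε then x' + (i - y) else if i < y' then i - ε else i

def tau (y ε y' x' : ℕ) : ℕ → ℕ := fun i =>
  if i < y then i else if i < x' then i + ε else if i < y' then (i - x') + y else i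

section Sig
variable {y ε y' x' : ℕ} (H1 : y ≤ x') (H2 : x' + ε = y')

lemma sig_zero (h : 0 < y) : sig y ε y' x' 0 = 0 := by
  unfold sig; rw [if_pos h]

include H1 H2 in
lemma sig_id_of_ge {i : ℕ} (h : y' ≤ i) : sig y ε y' x' i = i := by
  unfold sig; split_ifs <;> omega

include H1 H2 in
lemma sig_bound {i L : ℕ} (hi : i < L) (hL : y' ≤ L) : sig y ε y' x' i < L := by
  unfold sig; split_ifs <;> omega

include H1 H2 in
lemma tau_sig (i : ℕ) : tau y ε y' x' (sig y ε y' x' i) = i := by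
  unfold sig tau; split_ifs <;> omega

include H1 H2 in
lemma sig_tau (i : ℕ) : sig y ε y' x' (tau y ε y' x' i) = i := by
  unfold sig tau; split_ifs <;> omega

include H1 H2 in
lemma sig_key {Q : Type} (p : ℕ → Q) (H3 : 0 < ε)
    (hyx' : p y = p x') (hyy' : p y = p y') (i : ℕ) :
    p (sig y ε y' x' (i+1)) = p (sig y ε y' x' i + 1) := by
  unfold sig
  by_cases h1 : i + 1 < y
  · rw [if_pos h1, if_pos (show i < y by omega)]
  · by_cases h2 : i + 1 = y
    · rw [if_neg h1, if_pos (show i + 1 < y + ε by omega), if_pos (show i < y by omega)]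
      rw [show x' + (i+1-y) = x' from by omega, h2]
      exact hyx'.symm
    · by_cases h3 : i + 1 < y + ε
      · rw [if_neg h1, if_pos h3, if_neg (show ¬ i < y by omega),
          if_pos (show i < y + ε by omega)]
        rw [show x' + (i+1-y) = x' + (i - y) + 1 from by omega]
      · by_cases h4 : i + 1 = y + ε
        · rw [if_neg h1, if_neg (by omega), if_neg (show ¬ i < y by omega),
            if_pos (show i < y + ε by omega)]
          have hr' : x' + (i - y) + 1 = y' := by omega
          by_cases h5 : i + 1 < y'
          · rw [if_pos h5, show i + 1 - ε = y from by omega, hr']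
            exact hyy'
          · rw [if_neg h5, hr', show i + 1 = y' from by omega]
        · by_cases h6 : i + 1 < y'
          · rw [if_neg h1, if_neg (by omega), if_pos h6, if_neg (show ¬ i < y by omega),
              if_neg (show ¬ i < y + ε by omega), if_pos (show i < y' by omega)]
            rw [show i + 1 - ε = i - ε + 1 from by omega]
          · by_cases h7 : i + 1 = y'
            · rw [if_neg h1, if_neg (by omega), if_neg h6, if_neg (show ¬ i < y by omega),
                if_neg (show ¬ i < y + ε by omega), if_pos (show i < y' by omega)]
              rw [show i - ε + 1 = x' from by omega, h7]
              exact (hyy'.symm.trans hyx')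
            · rw [if_neg h1, if_neg (by omega), if_neg (by omega),
                if_neg (show ¬ i < y by omega), if_neg (show ¬ i < y + ε by omega),
                if_neg (show ¬ i < y' by omega)]

include H1 H2 in
lemma sig_sum {A : Type} [AddCommMonoid A] (f : ℕ → A) (L : ℕ) (hL : y' ≤ L) :
    ∑ i ∈ Finset.range L, f (sig y ε y' x' i) = ∑ i ∈ Finset.range L, f i := by
  apply Finset.sum_nbij' (i := sig y ε y' x') (j := tau y ε y' x')
  · intro a ha
    simp only [Finset.mem_range] at ha ⊢
    exact sig_bound H1 H2 ha hL
  · intro a ha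
    simp only [Finset.mem_range] at ha ⊢
    unfold tau; split_ifs <;> omega
  · intro a _; exact tau_sig H1 H2 a
  · intro a _; exact sig_tau H1 H2 a
  · intro a _; rfl

include H1 H2 in
lemma sig_split_sum (f : ℕ → ℕ) (q : ℕ) (hq1 : y + ε ≤ q) (hq2 : q ≤ y') :
    ∑ i ∈ Finset.range q, f (sig y ε y' x' i)
      = (∑ i ∈ Finset.range (q - ε), f i) + ∑ i ∈ Finset.Ico x' y', f i := by
  have hdisj : Disjoint (Finset.range (q - ε)) (Finset.Ico x' y') := by
    rw [Finset.disjoint_left]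
    intro a ha hb
    simp only [Finset.mem_range] at ha
    simp only [Finset.mem_Ico] at hb
    omega
  rw [← Finset.sum_union hdisj]
  apply Finset.sum_nbij' (i := sig y ε y' x') (j := tau y ε y' x')
  · intro a ha
    simp only [Finset.mem_range] at ha
    simp only [Finset.mem_union, Finset.mem_range, Finset.mem_Ico]
    unfold sig; split_ifs <;> omega
  · intro a ha
    simp only [Finset.mem_union, Finset.mem_range, Finset.mem_Ico] at ha
    simp only [Finset.mem_range]
    unfold tau; split_ifs <;> omega
  · intro a _; exact tau_sig H1 H2 a
  · intro a _; exact sig_tau H1 H2 a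
  · intro a _; rfl

end Sig

lemma not_in_L {γ : ℕ → Ltr}
    (hγ : γ ∈ (CatLang (ListStar Sset) Zfn ∪ OmegaPower Sset))
    (hfin : ∃ M, ∀ x, M ≤ x → γ x = 0)
    (q : ℕ) (hq : 1 ≤ q) (h1 : γ (q-1) = 1) (h0 : γ q = 0)
    (hnecnt : cnt γ 0 q ≠ cnt γ 1 q) : False := by
  rcases hγ with hA | hB
  · exact hnecnt (boundary_balance hA q hq h1 h0)
  · obtain ⟨M, hM⟩ := hfin
    obtain ⟨x, hx1, hx2⟩ := ones_unbounded hB M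
    rw [hM x hx1] at hx2
    exact absurd hx2 (by decide)

def gam1 (r t L : ℕ) : ℕ → Ltr :=
  fun x => if x < L then chi r x else if x < L + t then 0 else chi r (x - t)

lemma gam1_def (r t L z : ℕ) :
    gam1 r t L z = if z < L then chi r z else if z < L + t then 0 else chi r (z - t) := rfl

def gam2 (u : List Ltr) (y ε y' x' : ℕ)
    (hsb : ∀ z, z < u.length → sig y ε y' x' z < u.length) : ℕ → Ltr :=
  fun z => if h : z < u.length then u.get ⟨sig y ε y' x' z, hsb z h⟩ else 0

lemma gam2_pos (u : List Ltr) (y ε y' x' : ℕ) (hsb : ∀ z, z < u.length → sig y ε y' x' z < u.length)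
    {z : ℕ} (h : z < u.length) :
    gam2 u y ε y' x' hsb z = u.get ⟨sig y ε y' x' z, hsb z h⟩ := dif_pos h

lemma gam2_neg (u : List Ltr) (y ε y' x' : ℕ) (hsb : ∀ z, z < u.length → sig y ε y' x' z < u.length)
    {z : ℕ} (h : ¬ z < u.length) :
    gam2 u y ε y' x' hsb z = 0 := dif_neg h

end CEX
open CEX in
/-- The ω-language `{aⁿbⁿ ∣ n ≥ 1}* · {a}^ω ∪ {aⁿbⁿ ∣ n ≥ 1}^ω` (with `a = 0`, `b = 1`)
is not a finite union `U₁V₁^ω ∪ ⋯ ∪ U_nV_n^ω` with all `U_i, V_i` Parikh-recognizable. -/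
theorem counterexample_not_in_LPAomega :
    ¬ ∃ (n : ℕ) (U V : Fin n → Set (List (Fin 2))),
      (∀ i, ParikhRec (U i)) ∧ (∀ i, ParikhRec (V i)) ∧
      (CatLang
          (ListStar {w : List (Fin 2) | ∃ m : ℕ, 1 ≤ m ∧
            w = List.replicate m 0 ++ List.replicate m 1})
          {α : ℕ → Fin 2 | ∀ k, α k = 0}
        ∪ OmegaPower {w : List (Fin 2) | ∃ m : ℕ, 1 ≤ m ∧
            w = List.replicate m 0 ++ List.replicate m 1})
      = ⋃ i, CatLang (U i) (OmegaPower (V i)) := by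
  rintro ⟨n, U, V, hU, -, hEq⟩
  -- every χ_r is in some component
  have hchiL : ∀ r : ℕ, 1 ≤ r → ∃ i : Fin n, chi r ∈ CatLang (U i) (OmegaPower (V i)) := by
    intro r hr
    have h2 : chi r ∈ ⋃ i, CatLang (U i) (OmegaPower (V i)) := by
      rw [← hEq]
      exact Or.inl (chi_mem r hr)
    exact Set.mem_iUnion.mp h2
  set f : ℕ → Fin n := fun s => (hchiL (s+1) (Nat.le_add_left 1 s)).choose with hfdef
  have hspec : ∀ s : ℕ, chi (s+1) ∈ CatLang (U (f s)) (OmegaPower (V (f s))) :=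
    fun s => (hchiL (s+1) (Nat.le_add_left 1 s)).choose_spec
  obtain ⟨i₀, hinf⟩ := Finite.exists_infinite_fiber f
  have hinf' : (f ⁻¹' {i₀} : Set ℕ).Infinite := Set.infinite_coe_iff.mp hinf
  -- the Parikh automaton for U i₀
  obtain ⟨d, Au, -, hfl⟩ := hU i₀
  set Qc := Fintype.card Au.Q with hQc
  obtain ⟨r', hr'mem, hr'gt⟩ := hinf'.exists_gt (Qc + 1)
  have hfr : f r' = i₀ := hr'mem
  have hchi : chi (r'+1) ∈ CatLang (U i₀) (OmegaPower (V i₀)) := by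
    have := hspec r'
    rwa [hfr] at this
  set r := r' + 1 with hrdef
  have hrQ : Qc + 2 ≤ r := by omega
  have hr1 : 1 ≤ r := by omega
  -- destructure the decomposition of χ_r
  obtain ⟨u, huU, β, hβΩ, hagree, htail⟩ := hchi
  obtain ⟨w, hwV, hwne, hconc⟩ := hβΩ
  -- the all-a piece
  set t := (w (2*r*r)).length with htdef
  have htpos : 1 ≤ t := List.length_pos_iff.mpr (hwne (2*r*r))
  have hwip : w (2*r*r) = List.replicate t 0 := by
    rw [htdef]
    apply List.eq_replicate_of_mem
    intro b hb
    obtain ⟨xx, hxx, rfl⟩ := List.mem_iff_getElem.mp hb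
    rw [piece_get hconc (2*r*r) xx hxx, htail (partlen w (2*r*r) + xx)]
    apply chi_tail
    have := partlen_ge hwne (2*r*r)
    omega
  have htV : List.replicate t 0 ∈ V i₀ := hwip ▸ hwV (2*r*r)
  by_cases hcase : u.length < 2*r*r
  · -- BRANCH 1 : insertion of aᵗ at position |u|
    have hγmem : gam1 r t u.length ∈ CatLang (U i₀) (OmegaPower (V i₀)) := by
      refine ⟨u, huU, (fun x => if x < t then (0:Ltr) else β (x - t)),
        omega_prepend ⟨w, hwV, hwne, hconc⟩ htpos htV, ?_, ?_⟩
      · intro i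
        rw [gam1_def, if_pos i.isLt]
        exact hagree i
      · intro nn
        show (if nn < t then (0:Ltr) else β (nn - t)) = gam1 r t u.length (u.length + nn)
        rw [gam1_def]
        by_cases hm : nn < t
        · rw [if_pos hm, if_neg (show ¬ u.length + nn < u.length by omega),
            if_pos (show u.length + nn < u.length + t by omega)]
        · rw [if_neg hm, if_neg (show ¬ u.length + nn < u.length by omega),
            if_neg (show ¬ u.length + nn < u.length + t by omega), htail (nn - t)]
          congr 1
          omega
    have hγL : gam1 r t u.length ∈ (CatLang (ListStar Sset) Zfn ∪ OmegaPower Sset) := by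
      have h2 : gam1 r t u.length ∈ ⋃ i, CatLang (U i) (OmegaPower (V i)) :=
        Set.mem_iUnion.mpr ⟨i₀, hγmem⟩
      rw [← hEq] at h2
      exact h2
    -- block index of the position |u|
    obtain ⟨jp, mo, hjp_eq, hmo⟩ : ∃ jp mo : ℕ, u.length = 2*r*jp + mo ∧ mo < 2*r :=
      ⟨u.length / (2*r), u.length % (2*r), by
        have := Nat.div_add_mod u.length (2*r)
        omega, Nat.mod_lt _ (by omega)⟩
    have ejp : 2*r*(jp+1) = 2*r*jp + 2*r := by ring
    have hjpr : jp + 1 ≤ r := by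
      have h2 : 2*r*jp < 2*r*r := by omega
      have := Nat.lt_of_mul_lt_mul_left h2
      omega
    have hmul : 2*r*(jp+1) ≤ 2*r*r := Nat.mul_le_mul le_rfl hjpr
    apply not_in_L hγL ⟨2*r*r + t, ?_⟩ (2*r*(jp+1) + t) (by omega) ?_ ?_ ?_
    · -- finitely many ones
      intro x hx
      rw [gam1_def, if_neg (show ¬ x < u.length by omega),
        if_neg (show ¬ x < u.length + t by omega)]
      exact chi_tail (by omega)
    · -- letter before the boundary is b
      rw [gam1_def, if_neg (show ¬ 2*r*(jp+1) + t - 1 < u.length by omega),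
        if_neg (show ¬ 2*r*(jp+1) + t - 1 < u.length + t by omega),
        show 2*r*(jp+1) + t - 1 - t = 2*r*jp + (2*r - 1) from by omega]
      exact chi_b jp _ (by omega) (by omega) (by omega)
    · -- letter at the boundary is a
      rw [gam1_def, if_neg (show ¬ 2*r*(jp+1) + t < u.length by omega),
        if_neg (show ¬ 2*r*(jp+1) + t < u.length + t by omega),
        show 2*r*(jp+1) + t - t = 2*r*(jp+1) + 0 from by omega]
      exact chi_a (jp+1) 0 (by omega)
    · -- count imbalance
      have hcnt : ∀ ℓ : Ltr, cnt (gam1 r t u.length) ℓ (2*r*(jp+1) + t)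
          = cnt (chi r) ℓ (2*r*(jp+1)) + (if (0:Ltr) = ℓ then t else 0) := by
        intro ℓ
        unfold cnt
        rw [Finset.range_eq_Ico,
          ← Finset.sum_Ico_consecutive _ (show (0:ℕ) ≤ u.length + t by omega)
            (show u.length + t ≤ 2*r*(jp+1) + t by omega),
          ← Finset.sum_Ico_consecutive _ (show (0:ℕ) ≤ u.length by omega)
            (show u.length ≤ u.length + t by omega)]
        have p1 : ∀ i ∈ Finset.Ico 0 u.length,
            (if gam1 r t u.length i = ℓ then (1:ℕ) else 0) = (if chi r i = ℓ then 1 else 0) := by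
          intro i hi
          simp only [Finset.mem_Ico] at hi
          rw [gam1_def, if_pos hi.2]
        have p2 : ∑ i ∈ Finset.Ico u.length (u.length + t),
            (if gam1 r t u.length i = ℓ then (1:ℕ) else 0) = (if (0:Ltr) = ℓ then t else 0) := by
          have hh : ∀ i ∈ Finset.Ico u.length (u.length + t),
              (if gam1 r t u.length i = ℓ then (1:ℕ) else 0) = (if (0:Ltr) = ℓ then 1 else 0) := by
            intro i hi
            simp only [Finset.mem_Ico] at hi
            rw [gam1_def, if_neg (show ¬ i < u.length by omega),
              if_pos (show i < u.length + t by omega)]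
          rw [Finset.sum_congr rfl hh, Finset.sum_const, Nat.card_Ico,
            show u.length + t - u.length = t from by omega]
          by_cases h : (0:Ltr) = ℓ <;> simp [h]
        have p3 : ∑ i ∈ Finset.Ico (u.length + t) (2*r*(jp+1) + t),
            (if gam1 r t u.length i = ℓ then (1:ℕ) else 0)
            = ∑ i ∈ Finset.Ico u.length (2*r*(jp+1)), (if chi r i = ℓ then (1:ℕ) else 0) := by
          rw [← ico_shift (fun z => if chi r z = ℓ then 1 else 0) u.length (2*r*(jp+1)) t]
          apply Finset.sum_congr rfl
          intro i hi
          simp only [Finset.mem_Ico] at hi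
          rw [gam1_def, if_neg (show ¬ i < u.length by omega),
            if_neg (show ¬ i < u.length + t by omega)]
        have comb := Finset.sum_Ico_consecutive (fun i => if chi r i = ℓ then (1:ℕ) else 0)
          (Nat.zero_le u.length) (show u.length ≤ 2*r*(jp+1) by omega)
        have hcc : cnt (chi r) ℓ (2*r*(jp+1))
            = ∑ i ∈ Finset.Ico 0 (2*r*(jp+1)), (if chi r i = ℓ then (1:ℕ) else 0) := by
          unfold cnt
          rw [Finset.range_eq_Ico]
        rw [Finset.sum_congr rfl p1, p2, p3, Finset.range_eq_Ico, ← comb]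
        omega
      have h0 := hcnt 0
      have h1 := hcnt 1
      rw [cnt_chi r 0 (jp+1) hjpr, if_pos rfl] at h0
      rw [cnt_chi r 1 (jp+1) hjpr, if_neg (by decide)] at h1
      omega
  · -- BRANCH 2 : pumping inside the automaton Au
    push_neg at hcase
    have huacc : Au.FinAccepts u := by
      rw [← hfl] at huU
      exact huU
    obtain ⟨p, v, hp0, hstep, hpF, hpC⟩ := huacc
    have hblock : ∀ j : ℕ, ∃ z₁ z₂ : ℕ, z₁ < z₂ ∧ z₂ ≤ Qc ∧ p (2*r*j + z₁) = p (2*r*j + z₂) := by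
      intro j
      obtain ⟨a, b, hab, heq⟩ := Fintype.exists_ne_map_eq_of_card_lt
        (fun z : Fin (Qc+1) => p (2*r*j + (z:ℕ))) (by rw [Fintype.card_fin]; omega)
      rcases hab.lt_or_gt with h | h
      · exact ⟨a, b, h, by omega, heq⟩
      · exact ⟨b, a, h, by omega, heq.symm⟩
    choose z1 z2 hz12 hz2Q hzeq using hblock
    obtain ⟨j', k', hjk, hρ⟩ := Fintype.exists_ne_map_eq_of_card_lt
      (fun j : Fin r => p (2*r*(j:ℕ) + z1 (j:ℕ))) (by rw [Fintype.card_fin]; omega)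
    have hpair : ∃ jv kv : ℕ, jv < kv ∧ kv < r ∧
        p (2*r*jv + z1 jv) = p (2*r*kv + z1 kv) := by
      rcases hjk.lt_or_gt with h | h
      · exact ⟨j', k', h, k'.isLt, hρ⟩
      · exact ⟨k', j', h, j'.isLt, hρ.symm⟩
    obtain ⟨jv, kv, hjklt, hkr, hpjk⟩ := hpair
    set x := 2*r*jv + z1 jv with hxd
    set y := 2*r*jv + z2 jv with hyd
    set x' := 2*r*kv + z1 kv with hx'd
    set y' := 2*r*kv + z2 kv with hy'd
    set ε := y' - x' with hεd
    have hz12j := hz12 jv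
    have hz12k := hz12 kv
    have hz2Qj := hz2Q jv
    have hz2Qk := hz2Q kv
    have ej : 2*r*(jv+1) = 2*r*jv + 2*r := by ring
    have ek : 2*r*(kv+1) = 2*r*kv + 2*r := by ring
    have hBjk : 2*r*(jv+1) ≤ 2*r*kv := Nat.mul_le_mul le_rfl (by omega)
    have hBkr : 2*r*(kv+1) ≤ 2*r*r := Nat.mul_le_mul le_rfl (by omega)
    have H1 : y ≤ x' := by omega
    have H2 : x' + ε = y' := by omega
    have hεpos : 0 < ε := by omega
    have hylen : y' ≤ u.length := by omega
    have hsb : ∀ z, z < u.length → sig y ε y' x' z < u.length :=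
      fun z hz => sig_bound H1 H2 hz hylen
    have hpy_x' : p y = p x' := (hzeq jv).symm.trans hpjk
    have hpy_y' : p y = p y' := hpy_x'.trans (hzeq kv)
    -- the rearranged word
    have hw2acc : Au.FinAccepts (List.ofFn
        (fun i : Fin u.length => u.get ⟨sig y ε y' x' (i:ℕ), hsb (i:ℕ) i.isLt⟩)) := by
      refine ⟨fun i => p (sig y ε y' x' i), fun i => v (sig y ε y' x' i), ?_, ?_, ?_, ?_⟩
      · show p (sig y ε y' x' 0) = Au.q0
        rw [sig_zero (show 0 < y by omega)]
        exact hp0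
      · intro i
        have hi : (i:ℕ) < u.length := lt_of_lt_of_eq i.isLt List.length_ofFn
        simp only [List.get_eq_getElem, List.getElem_ofFn]
        rw [sig_key H1 H2 p hεpos hpy_x' hpy_y' (i:ℕ)]
        exact hstep ⟨sig y ε y' x' (i:ℕ), hsb (i:ℕ) hi⟩
      · simp only [List.length_ofFn]
        show p (sig y ε y' x' u.length) ∈ Au.F
        rw [sig_id_of_ge H1 H2 (le_trans hylen le_rfl)]
        exact hpF
      · simp only [List.length_ofFn]
        show (∑ j ∈ Finset.range u.length, v (sig y ε y' x' j)) ∈ Au.C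
        rw [sig_sum H1 H2 v u.length hylen]
        exact hpC
    have hγmem : gam2 u y ε y' x' hsb ∈ CatLang (U i₀) (OmegaPower (V i₀)) := by
      refine ⟨List.ofFn (fun i : Fin u.length =>
          u.get ⟨sig y ε y' x' (i:ℕ), hsb (i:ℕ) i.isLt⟩),
        by rw [← hfl]; exact hw2acc, (fun _ => (0:Ltr)), zero_mem_omega htpos htV, ?_, ?_⟩
      · intro i
        have hi : (i:ℕ) < u.length := lt_of_lt_of_eq i.isLt List.length_ofFn
        simp only [List.get_eq_getElem, List.getElem_ofFn]
        rw [gam2_pos u y ε y' x' hsb hi, List.get_eq_getElem]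
      · intro nn
        rw [gam2_neg u y ε y' x' hsb (by rw [List.length_ofFn]; omega)]
    have hγL : gam2 u y ε y' x' hsb ∈ (CatLang (ListStar Sset) Zfn ∪ OmegaPower Sset) := by
      have h2 : gam2 u y ε y' x' hsb ∈ ⋃ i, CatLang (U i) (OmegaPower (V i)) :=
        Set.mem_iUnion.mpr ⟨i₀, hγmem⟩
      rw [← hEq] at h2
      exact h2
    have hγchi : ∀ z (h : z < u.length), gam2 u y ε y' x' hsb z = chi r (sig y ε y' x' z) := by
      intro z h
      rw [gam2_pos u y ε y' x' hsb h]
      exact (hagree ⟨sig y ε y' x' z, hsb z h⟩).symm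
    apply not_in_L hγL ⟨u.length, ?_⟩ (2*r*(jv+1) + ε) (by omega) ?_ ?_ ?_
    · intro xz hxz
      exact gam2_neg u y ε y' x' hsb (by omega)
    · -- letter before boundary
      rw [hγchi _ (by omega)]
      have hs1 : sig y ε y' x' (2*r*(jv+1) + ε - 1) = 2*r*jv + (2*r - 1) := by
        unfold sig
        rw [if_neg (by omega), if_neg (by omega), if_pos (by omega)]
        omega
      rw [hs1]
      exact chi_b jv _ (by omega) (by omega) (by omega)
    · -- letter at boundary
      rw [hγchi _ (by omega)]
      by_cases hqy : 2*r*(jv+1) + ε < y'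
      · have hs0 : sig y ε y' x' (2*r*(jv+1) + ε) = 2*r*(jv+1) + 0 := by
          unfold sig
          rw [if_neg (by omega), if_neg (by omega), if_pos hqy]
          omega
        rw [hs0]
        exact chi_a (jv+1) 0 (by omega)
      · have hs0 : sig y ε y' x' (2*r*(jv+1) + ε) = 2*r*kv + z2 kv := by
          unfold sig
          rw [if_neg (by omega), if_neg (by omega), if_neg hqy]
          omega
        rw [hs0]
        exact chi_a kv _ (by omega)
    · -- count imbalance
      have hcnt : ∀ ℓ : Ltr, cnt (gam2 u y ε y' x' hsb) ℓ (2*r*(jv+1) + ε)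
          = cnt (chi r) ℓ (2*r*(jv+1)) + (if (0:Ltr) = ℓ then ε else 0) := by
        intro ℓ
        unfold cnt
        have hc1 : ∀ i ∈ Finset.range (2*r*(jv+1) + ε),
            (if gam2 u y ε y' x' hsb i = ℓ then (1:ℕ) else 0)
            = (fun z => if chi r z = ℓ then (1:ℕ) else 0) (sig y ε y' x' i) := by
          intro i hi
          simp only [Finset.mem_range] at hi
          rw [hγchi i (by omega)]
        rw [Finset.sum_congr rfl hc1,
          sig_split_sum H1 H2 (fun z => if chi r z = ℓ then (1:ℕ) else 0)
            (2*r*(jv+1) + ε) (by omega) (by omega)]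
        congr 1
        · rw [show 2*r*(jv+1) + ε - ε = 2*r*(jv+1) from by omega]
        · have hc2 : ∀ i ∈ Finset.Ico x' y',
              (if chi r i = ℓ then (1:ℕ) else 0) = (if (0:Ltr) = ℓ then 1 else 0) := by
            intro i hi
            simp only [Finset.mem_Ico] at hi
            rw [show i = 2*r*kv + (i - 2*r*kv) from by omega, chi_a kv _ (by omega)]
          rw [Finset.sum_congr rfl hc2, Finset.sum_const, Nat.card_Ico,
            show y' - x' = ε from by omega]
          by_cases h : (0:Ltr) = ℓ <;> simp [h]
      have h0 := hcnt 0
      have h1 := hcnt 1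
      rw [cnt_chi r 0 (jv+1) (by omega), if_pos rfl] at h0
      rw [cnt_chi r 1 (jv+1) (by omega), if_neg (by decide)] at h1
      omega
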